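/- Let p > 1, 1 < q < p, μ ∈ (q, p) and s̃ ∈ (1, p). Define f : ℝ → ℝ by f(s) = 0 for s ≤ 0, f(s) = s^{μ-1} for 0 ≤ s ≤ 1, and f(s) = s^{p-1}·ln(s) + s^{s̃-1} for s > 1, and set F(s) = ∫₀^s f(t) dt. Then f fails the Ambrosetti–Rabinowitz condition: for every μ' > p and every M > 0 there exists s ≥ M such that μ'·F(s) > f(s)·s. -/

import Mathlib

/-- The example function from the Remark after hypotheses H fails the
Ambrosetti–Rabinowitz condition: for every `μ' > p` and every `M > 0` there
exists `s ≥ M` with `μ' F(s) > f(s) s`. -/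
theorem stmt_11 (p q μ st : ℝ) (hp : 1 < p) (hq1 : 1 < q) (hqp : q < p)
    (hμq : q < μ) (hμp : μ < p) (hst1 : 1 < st) (hstp : st < p)
    (f : ℝ → ℝ)
    (hf0 : ∀ s : ℝ, s ≤ 0 → f s = 0)
    (hf1 : ∀ s : ℝ, 0 ≤ s → s ≤ 1 → f s = s ^ (μ - 1))
    (hf2 : ∀ s : ℝ, 1 < s → f s = s ^ (p - 1) * Real.log s + s ^ (st - 1))
    (F : ℝ → ℝ) (hF : ∀ s, F s = ∫ t in (0:ℝ)..s, f t) :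
    ∀ μ' : ℝ, p < μ' → ∀ M : ℝ, 0 < M → ∃ s : ℝ, M ≤ s ∧ f s * s < μ' * F s := by
  intro μ' hμ' M hM
  have hp0 : (0:ℝ) < p := lt_trans one_pos hp
  have hμ'0 : (0:ℝ) < μ' := lt_trans hp0 hμ'
  set ε : ℝ := μ' / p - 1 with hε
  have hε0 : 0 < ε := by
    have : 1 < μ' / p := (one_lt_div hp0).mpr hμ'
    rw [hε]; linarith
  set C : ℝ := (μ' / p ^ 2 + 1) / ε with hC
  have hC0 : 0 < C := by
    apply div_pos _ hε0
    have : 0 < μ' / p ^ 2 := div_pos hμ'0 (by positivity)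
    linarith
  set s : ℝ := max M (Real.exp (C + 1)) with hs
  have hsM : M ≤ s := le_max_left _ _
  have hse : Real.exp (C + 1) ≤ s := le_max_right _ _
  have hs1 : 1 < s := lt_of_lt_of_le (by
    calc (1:ℝ) = Real.exp 0 := Real.exp_zero.symm
      _ < Real.exp (C + 1) := Real.exp_lt_exp.mpr (by linarith)) hse
  have hs0 : 0 < s := lt_trans one_pos hs1
  have hL : C + 1 ≤ Real.log s := by
    rw [← Real.log_exp (C + 1)]
    exact Real.log_le_log (Real.exp_pos _) hse
  clear_value ε C s
  refine ⟨s, hsM, ?_⟩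
  -- the comparison function on [1,s]
  set g : ℝ → ℝ := fun t => t ^ (p - 1) * Real.log t + t ^ (st - 1) with hg
  have hcontlog : ContinuousOn Real.log (Set.Icc 1 s) :=
    Real.continuousOn_log.mono (fun t ht => by
      have := ht.1; simp only [Set.mem_compl_iff, Set.mem_singleton_iff]
      intro h; rw [h] at this; linarith)
  have hcont_g : ContinuousOn g (Set.Icc 1 s) := by
    apply ContinuousOn.add
    · exact ((Real.continuous_rpow_const (by linarith)).continuousOn).mul hcontlog
    · exact (Real.continuous_rpow_const (by linarith)).continuousOn
  have hfg : Set.EqOn f g (Set.uIcc 1 s) := by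
    intro t ht
    rw [Set.uIcc_of_le hs1.le] at ht
    rcases eq_or_lt_of_le ht.1 with h | h
    · rw [← h, hf1 1 zero_le_one le_rfl]
      simp [hg]
    · exact hf2 t h
  have hint_g : IntervalIntegrable g MeasureTheory.volume 1 s := by
    apply ContinuousOn.intervalIntegrable
    rwa [Set.uIcc_of_le hs1.le]
  have hint_f1s : IntervalIntegrable f MeasureTheory.volume 1 s :=
    hint_g.congr (by
      intro t ht
      exact (hfg (Set.uIoc_subset_uIcc ht)).symm)
  -- on [0,1]
  set h0 : ℝ → ℝ := fun t => t ^ (μ - 1) with hh0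
  have hfh0 : Set.EqOn f h0 (Set.uIcc 0 1) := by
    intro t ht
    rw [Set.uIcc_of_le zero_le_one] at ht
    exact hf1 t ht.1 ht.2
  have hint_h0 : IntervalIntegrable h0 MeasureTheory.volume 0 1 :=
    (Real.continuous_rpow_const (by linarith)).continuousOn.intervalIntegrable
  have hint_f01 : IntervalIntegrable f MeasureTheory.volume 0 1 :=
    hint_h0.congr (by
      intro t ht
      exact (hfh0 (Set.uIoc_subset_uIcc ht)).symm)
  -- split F s
  have hFs : F s = (∫ t in (0:ℝ)..1, f t) + ∫ t in (1:ℝ)..s, f t := by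
    rw [hF, intervalIntegral.integral_add_adjacent_intervals hint_f01 hint_f1s]
  -- first part nonneg
  have h01 : 0 ≤ ∫ t in (0:ℝ)..1, f t := by
    rw [intervalIntegral.integral_congr hfh0]
    apply intervalIntegral.integral_nonneg zero_le_one
    intro t ht
    exact Real.rpow_nonneg ht.1 _
  -- antiderivative
  set G : ℝ → ℝ := fun t => t ^ p * Real.log t / p - t ^ p / p ^ 2 with hG
  have hderiv : ∀ t ∈ Set.uIcc (1:ℝ) s, HasDerivAt G (t ^ (p - 1) * Real.log t) t := by
    intro t ht
    rw [Set.uIcc_of_le hs1.le] at ht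
    have ht0 : 0 < t := lt_of_lt_of_le one_pos ht.1
    have h1 : HasDerivAt (fun x : ℝ => x ^ p) (p * t ^ (p - 1)) t :=
      Real.hasDerivAt_rpow_const (Or.inl ht0.ne')
    have h2 : HasDerivAt Real.log t⁻¹ t := Real.hasDerivAt_log ht0.ne'
    have h3 := ((h1.mul h2).div_const p).sub (h1.div_const (p ^ 2))
    refine h3.congr_deriv ?_
    have hps : t ^ p = t ^ (p - 1) * t := by
      rw [← Real.rpow_add_one ht0.ne']; ring_nf
    field_simp
    rw [hps]
    ring
  have hlow : IntervalIntegrable (fun t => t ^ (p-1) * Real.log t) MeasureTheory.volume 1 s := by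
    apply ContinuousOn.intervalIntegrable
    rw [Set.uIcc_of_le hs1.le]
    exact ((Real.continuous_rpow_const (by linarith)).continuousOn).mul hcontlog
  have hmono : (∫ t in (1:ℝ)..s, (fun t => t ^ (p-1) * Real.log t) t) ≤ ∫ t in (1:ℝ)..s, g t := by
    apply intervalIntegral.integral_mono_on hs1.le hlow hint_g
    intro t ht
    simp only [hg]
    have := Real.rpow_nonneg (le_trans zero_le_one ht.1) (st - 1)
    linarith
  have hval : (∫ t in (1:ℝ)..s, t ^ (p-1) * Real.log t) = G s - G 1 :=
    intervalIntegral.integral_eq_sub_of_hasDerivAt hderiv hlow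
  have hG1 : G 1 = - (1 / p ^ 2) := by
    simp only [hG, Real.one_rpow, Real.log_one]
    ring
  have h1s : G s - G 1 ≤ ∫ t in (1:ℝ)..s, f t := by
    rw [intervalIntegral.integral_congr hfg, ← hval]
    exact hmono
  -- lower bound on F s
  have hFlow : s ^ p * Real.log s / p - s ^ p / p ^ 2 ≤ F s := by
    rw [hFs]
    have : G s - G 1 = s ^ p * Real.log s / p - s ^ p / p ^ 2 + 1 / p ^ 2 := by
      rw [hG1]; simp only [hG]; ring
    have hpp : (0:ℝ) < 1 / p ^ 2 := one_div_pos.mpr (pow_pos hp0 2)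
    have h2 : s ^ p * Real.log s / p - s ^ p / p ^ 2 + 1 / p ^ 2 ≤ ∫ t in (1:ℝ)..s, f t :=
      this ▸ h1s
    linarith
  -- compute f s * s
  have hfs : f s * s = s ^ p * Real.log s + s ^ st := by
    rw [hf2 s hs1]
    have e1 : s ^ (p - 1) * s = s ^ p := by
      rw [← Real.rpow_add_one hs0.ne']; norm_num
    have e2 : s ^ (st - 1) * s = s ^ st := by
      rw [← Real.rpow_add_one hs0.ne']; norm_num
    calc (s ^ (p-1) * Real.log s + s ^ (st-1)) * s
        = (s ^ (p-1) * s) * Real.log s + s ^ (st - 1) * s := by ring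
      _ = s ^ p * Real.log s + s ^ st := by rw [e1, e2]
  -- final estimate
  set A : ℝ := s ^ p with hA
  have hA0 : 0 < A := Real.rpow_pos_of_pos hs0 p
  have hstA : s ^ st ≤ A := by
    exact Real.rpow_le_rpow_left_iff hs1 |>.mpr hstp.le
  set L : ℝ := Real.log s with hLdef
  have hLC : C < L := by linarith
  have key : A * L + A < μ' * (A * L / p - A / p ^ 2) := by
    have hεL : ε * L > μ' / p ^ 2 + 1 := by
      calc ε * L > ε * C := by exact mul_lt_mul_of_pos_left hLC hε0
        _ = μ' / p ^ 2 + 1 := by rw [hC]; field_simp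
    have hexp : μ' * (A * L / p - A / p ^ 2) = A * ((1 + ε) * L - μ' / p ^ 2) := by
      rw [hε]; field_simp; ring
    rw [hexp]
    have h := mul_pos hA0 (show (0:ℝ) < ε * L - μ' / p ^ 2 - 1 by linarith)
    nlinarith [h]
  calc f s * s = A * L + s ^ st := by rw [hfs]
    _ ≤ A * L + A := by linarith
    _ < μ' * (A * L / p - A / p ^ 2) := key
    _ ≤ μ' * F s := by
        apply mul_le_mul_of_nonneg_left _ hμ'0.le
        calc A * L / p - A / p ^ 2 = s ^ p * Real.log s / p - s ^ p / p ^ 2 := by rw [hA, hLdef]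
          _ ≤ F s := hFlow
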